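/- For the degree-4 binary form ω viewed as a V_4-valued variable, the skewing relation ⟨⟨P_4, ω⟩_3, ω⟩_1 = (1/2)⟨P_4, ⟨ω,ω⟩_3⟩_1 holds identically for all P_4 ∈ V_4; that is, the constant a_4 in the decomposition of the skewing map δ equals 1/2. -/

import Mathlib

open MvPolynomial

noncomputable section

abbrev P := MvPolynomial (Fin 2) ℝ

/-- partial derivative, as a plain function -/
def pd (i : Fin 2) (u : P) : P := MvPolynomial.pderiv i u

/-- The Clebsch-Gordan pairing of binary forms. -/
def CG (p : ℕ) (u v : P) : P :=
  ((p.factorial : ℝ)⁻¹) •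
    ∑ k ∈ Finset.range (p + 1),
      (((-1 : ℝ) ^ k * (p.choose k : ℝ)) •
        ((pd 0)^[p - k] ((pd 1)^[k] u) * (pd 0)^[k] ((pd 1)^[p - k] v)))

@[simp] lemma ofNat_C (n : ℕ) [n.AtLeastTwo] : (no_index (OfNat.ofNat n) : P) = C (OfNat.ofNat n) :=
  (map_ofNat (C : ℝ →+* P) n).symm

lemma pd_it_add (i : Fin 2) (k : ℕ) (u v : P) :
    (pd i)^[k] (u + v) = (pd i)^[k] u + (pd i)^[k] v := by
  induction k generalizing u v with
  | zero => rfl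
  | succ n ih => simp [Function.iterate_succ_apply, pd, map_add, ih]

lemma pd_it_smul (i : Fin 2) (k : ℕ) (c : ℝ) (u : P) :
    (pd i)^[k] (c • u) = c • (pd i)^[k] u := by
  induction k generalizing u with
  | zero => rfl
  | succ n ih => simp [Function.iterate_succ_apply, pd, ih]

lemma CG_add_left (p : ℕ) (u v w : P) : CG p (u + v) w = CG p u w + CG p v w := by
  simp [CG, pd_it_add, add_mul, Finset.sum_add_distrib, smul_add]
lemma CG_add_right (p : ℕ) (u v w : P) : CG p u (v + w) = CG p u v + CG p u w := by
  simp [CG, pd_it_add, mul_add, Finset.sum_add_distrib, smul_add]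
lemma CG_smul_left (p : ℕ) (c : ℝ) (u w : P) : CG p (c • u) w = c • CG p u w := by
  simp only [CG, pd_it_smul, smul_mul_assoc, Finset.smul_sum, smul_smul]
  refine Finset.sum_congr rfl fun k _ => ?_
  congr 1
  ring
lemma CG_smul_right (p : ℕ) (c : ℝ) (u w : P) : CG p u (c • w) = c • CG p u w := by
  simp only [CG, pd_it_smul, mul_smul_comm, Finset.smul_sum, smul_smul]
  refine Finset.sum_congr rfl fun k _ => ?_
  congr 1
  ring
lemma CG_zero_left (p : ℕ) (w : P) : CG p 0 w = 0 := by
  have := CG_smul_left p 0 0 w; simpa using this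
lemma CG_zero_right (p : ℕ) (u : P) : CG p u 0 = 0 := by
  have := CG_smul_right p 0 u 0; simpa using this

/-- the monomial basis of V₄ -/
def mn (a : ℕ) : P := X 0 ^ a * X 1 ^ (4 - a)

def M (i : Fin 5) : P := mn i.val

lemma rep (h : P) (hh : h.IsHomogeneous 4) :
    ∃ c : Fin 5 → ℝ, h = ∑ i, c i • M i := by
  have hmem : h ∈ Submodule.span ℝ (Set.range M) := by
    rw [h.as_sum]
    apply Submodule.sum_mem
    intro d hd
    have hc : coeff d h ≠ 0 := by rwa [mem_support_iff] at hd
    have hdeg : d 0 + d 1 = 4 := by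
      have := hh hc
      rw [Finsupp.weight_apply, Finsupp.sum_fintype] at this
      · simpa [Fin.sum_univ_two] using this
      · intro _; simp
    have hd0 : (d 0) < 5 := by omega
    have hmono : (monomial d) (coeff d h) = coeff d h • M ⟨d 0, hd0⟩ := by
      rw [monomial_eq]
      rw [Finsupp.prod_fintype]
      · simp [Fin.prod_univ_two, M, mn, Finsupp.single_apply, smul_eq_C_mul]
        have h1 : d 1 = 4 - d 0 := by omega
        rw [h1]
        tauto
      · intro _; simp
    rw [hmono]
    exact Submodule.smul_mem _ _ (Submodule.subset_span ⟨⟨d 0, hd0⟩, rfl⟩)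
  rw [Submodule.mem_span_range_iff_exists_fun] at hmem
  obtain ⟨c, hc⟩ := hmem
  exact ⟨c, hc.symm⟩

/-- the polarized skewing identity as a predicate -/
def S (h u v : P) : Prop :=
  CG 1 (CG 3 h u) v - CG 1 (CG 3 h v) u
    = ((1 : ℝ) / 2) • CG 1 h (CG 3 u v - CG 3 v u)

lemma S_add1 {h h' u v : P} (H1 : S h u v) (H2 : S h' u v) : S (h + h') u v := by
  unfold S at *
  simp only [CG_add_left]
  rw [smul_add, ← H1, ← H2]
  abel

lemma S_smul1 {h u v : P} (c : ℝ) (H : S h u v) : S (c • h) u v := by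
  unfold S at *
  simp only [CG_smul_left]
  rw [← smul_sub, H, smul_comm]

lemma S_zero1 (u v : P) : S 0 u v := by
  unfold S
  simp [CG_zero_left]

lemma S_add2 {h u u' v : P} (H1 : S h u v) (H2 : S h u' v) : S h (u + u') v := by
  unfold S at *
  simp only [CG_add_right, CG_add_left]
  rw [← sub_add_sub_comm, ← sub_add_sub_comm, CG_add_right, smul_add, ← H1, ← H2]

lemma S_smul2 {h u v : P} (c : ℝ) (H : S h u v) : S h (c • u) v := by
  unfold S at *
  simp only [CG_smul_left, CG_smul_right, ← smul_sub]
  rw [H, smul_comm]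

lemma S_zero2 (h v : P) : S h 0 v := by
  unfold S
  simp [CG_zero_left, CG_zero_right]

lemma S_add3 {h u v v' : P} (H1 : S h u v) (H2 : S h u v') : S h u (v + v') := by
  unfold S at *
  simp only [CG_add_right, CG_add_left]
  rw [← sub_add_sub_comm, ← sub_add_sub_comm, CG_add_right, smul_add, ← H1, ← H2]

lemma S_smul3 {h u v : P} (c : ℝ) (H : S h u v) : S h u (c • v) := by
  unfold S at *
  simp only [CG_smul_left, CG_smul_right, ← smul_sub]
  rw [H, smul_comm]

lemma S_zero3 (h u : P) : S h u 0 := by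
  unfold S
  simp [CG_zero_left, CG_zero_right]

lemma S_diag (h u : P) : S h u u := by
  unfold S
  simp [CG_zero_right]

lemma CG_neg_right (p : ℕ) (u w : P) : CG p u (-w) = - CG p u w := by
  have := CG_smul_right p (-1) u w; simpa using this

lemma S_swap {h u v : P} (H : S h u v) : S h v u := by
  unfold S at *
  rw [show CG 3 v u - CG 3 u v = -(CG 3 u v - CG 3 v u) by abel, CG_neg_right, smul_neg, ← H]
  abel

lemma S_sum1 {ι : Type*} (s : Finset ι) (f : ι → P) (u v : P)
    (H : ∀ i ∈ s, S (f i) u v) : S (∑ i ∈ s, f i) u v :=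
  Finset.sum_induction f (fun h => S h u v) (fun _ _ ha hb => S_add1 ha hb) (S_zero1 u v) H

lemma S_sum2 {ι : Type*} (s : Finset ι) (h : P) (f : ι → P) (v : P)
    (H : ∀ i ∈ s, S h (f i) v) : S h (∑ i ∈ s, f i) v :=
  Finset.sum_induction f (fun u => S h u v) (fun _ _ ha hb => S_add2 ha hb) (S_zero2 h v) H

lemma S_sum3 {ι : Type*} (s : Finset ι) (h u : P) (f : ι → P)
    (H : ∀ i ∈ s, S h u (f i)) : S h u (∑ i ∈ s, f i) :=
  Finset.sum_induction f (fun v => S h u v) (fun _ _ ha hb => S_add3 ha hb) (S_zero3 h u) H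

set_option maxHeartbeats 0 in
lemma key_lt (a b c : ℕ) (ha : a < 5) (hb : b < 5) (hc : c < 5) (hbc : b < c) :
    S (mn a) (mn b) (mn c) := by
  interval_cases a <;> interval_cases b <;> interval_cases c <;>
  · unfold S mn
    norm_num
    simp only [CG, Finset.sum_range_succ, Finset.sum_range_zero, Function.iterate_succ,
      Function.iterate_zero, Function.comp_apply, id_eq, pd, map_mul, smul_add, smul_sub,
      smul_smul]
    simp only [pderiv_mul, pderiv_X, pderiv_C, smul_eq_C_mul, ofNat_C, map_mul, map_add,
      map_sub, map_pow, map_zero, map_one, Pi.single_apply, Fin.isValue]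
    apply MvPolynomial.funext; intro x
    simp [Nat.factorial]
    try norm_num
    try ring
    try tauto

lemma key (a b c : ℕ) (ha : a < 5) (hb : b < 5) (hc : c < 5) :
    S (mn a) (mn b) (mn c) := by
  rcases lt_trichotomy b c with h | h | h
  · exact key_lt a b c ha hb hc h
  · subst h; exact S_diag _ _
  · exact S_swap (key_lt a c b ha hc hb h)

/-- the skewing relation ⟨⟨P₄,ω⟩₃,ω⟩₁ = (1/2)⟨P₄,⟨ω,ω⟩₃⟩₁ for a
V₄-valued 1-form ω, stated in polarized form on components u, v ∈ V₄:
the constant a₄ in the skewing map equals 1/2. -/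
theorem skewing_a4_eq_half (P4 u v : P)
    (hP : P4.IsHomogeneous 4) (hu : u.IsHomogeneous 4) (hv : v.IsHomogeneous 4) :
    CG 1 (CG 3 P4 u) v - CG 1 (CG 3 P4 v) u
      = ((1 : ℝ) / 2) • CG 1 P4 (CG 3 u v - CG 3 v u) := by
  obtain ⟨a, ha⟩ := rep P4 hP
  obtain ⟨b, hb⟩ := rep u hu
  obtain ⟨c, hc⟩ := rep v hv
  have : S P4 u v := by
    rw [ha, hb, hc]
    apply S_sum1; intro i _
    apply S_smul1
    apply S_sum2; intro j _
    apply S_smul2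
    apply S_sum3; intro k _
    apply S_smul3
    exact key i.val j.val k.val i.isLt j.isLt k.isLt
  exact this
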